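/- Let P be a finite set of weighted points in ℝ² and let c be a point with max_{p∈P} d(p,c)/w(p) = r attained by exactly two points p₁, p₂ ∈ P. If c minimizes max_{p∈P} d(p,x)/w(p), then c lies on the line segment between p₁ and p₂. -/

import Mathlib

abbrev Pt := EuclideanSpace ℝ (Fin 2)

theorem stmt_17 (P : Finset Pt) (hP : P.Nonempty) (w : Pt → ℝ)
    (hw : ∀ p ∈ P, 0 < w p) (c : Pt) (r : ℝ)
    (hmax : P.sup' hP (fun p => dist p c / w p) = r)
    (p₁ p₂ : Pt) (h₁ : p₁ ∈ P) (h₂ : p₂ ∈ P) (hne : p₁ ≠ p₂)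
    (hd₁ : dist p₁ c / w p₁ = r) (hd₂ : dist p₂ c / w p₂ = r)
    (honly : ∀ p ∈ P, p ≠ p₁ → p ≠ p₂ → dist p c / w p < r)
    (hmin : ∀ x : Pt, P.sup' hP (fun p => dist p c / w p) ≤ P.sup' hP (fun p => dist p x / w p)) :
    c ∈ segment ℝ p₁ p₂ := by
  classical
  by_contra hc
  set K : Set Pt := segment ℝ p₁ p₂ with hK
  have hKcompact : IsCompact K := by
    rw [hK, segment_eq_image]
    exact (isCompact_Icc).image (by continuity)
  have hKcomplete : IsComplete K := hKcompact.isClosed.isComplete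
  have hKne : K.Nonempty := ⟨p₁, left_mem_segment ℝ p₁ p₂⟩
  obtain ⟨c', hc'K, hc'min⟩ := exists_norm_eq_iInf_of_complete_convex hKne hKcomplete
    (convex_segment p₁ p₂) c
  have hinner : ∀ q ∈ K, inner ℝ (c - c') (q - c') ≤ (0:ℝ) :=
    (norm_eq_iInf_iff_real_inner_le_zero (convex_segment p₁ p₂) hc'K).1 hc'min
  have hcc' : c ≠ c' := fun h => hc (h ▸ hc'K)
  have hD : (0:ℝ) < dist c' c := dist_pos.2 fun h => hcc' h.symm
  set D := dist c' c with hDdef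
  have hkey : ∀ q ∈ K, dist q c' < dist q c := by
    intro q hq
    have h1 : ‖q - c‖ ^ 2 = ‖q - c'‖ ^ 2 - 2 * inner ℝ (q - c') (c - c') + ‖c - c'‖ ^ 2 := by
      have := @norm_sub_sq_real Pt _ _ (q - c') (c - c')
      convert this using 2 <;> abel_nf
    have h2 : inner ℝ (q - c') (c - c') ≤ (0:ℝ) := by
      rw [real_inner_comm]; exact hinner q hq
    have hne0 : c - c' ≠ 0 := sub_ne_zero.2 hcc'
    have h3 : (0:ℝ) < ‖c - c'‖ ^ 2 := pow_pos (norm_pos_iff.2 hne0) 2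
    have h4 : ‖q - c'‖ ^ 2 < ‖q - c‖ ^ 2 := by nlinarith
    have := lt_of_pow_lt_pow_left₀ 2 (norm_nonneg (q - c)) h4
    simpa [dist_eq_norm] using this
  have hk1 : dist p₁ c' < dist p₁ c := hkey p₁ (left_mem_segment ℝ p₁ p₂)
  have hk2 : dist p₂ c' < dist p₂ c := hkey p₂ (right_mem_segment ℝ p₁ p₂)
  set Q : Finset Pt := (P.erase p₁).erase p₂ with hQ
  set S : Finset ℝ := insert (1:ℝ) (Q.image fun p => (r - dist p c / w p) * w p / D) with hS
  have hSne : S.Nonempty := ⟨1, Finset.mem_insert_self _ _⟩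
  set t₀ : ℝ := S.inf' hSne id with ht₀
  have hQmem : ∀ p ∈ Q, p ∈ P ∧ p ≠ p₁ ∧ p ≠ p₂ := by
    intro p hp
    rw [hQ] at hp
    have h2 := Finset.ne_of_mem_erase hp
    have hp' := Finset.mem_of_mem_erase hp
    exact ⟨Finset.mem_of_mem_erase hp', Finset.ne_of_mem_erase hp', h2⟩
  have ht₀pos : 0 < t₀ := by
    rw [ht₀, Finset.lt_inf'_iff]
    intro b hb
    rw [hS, Finset.mem_insert] at hb
    rcases hb with rfl | hb
    · norm_num
    · obtain ⟨p, hp, rfl⟩ := Finset.mem_image.1 hb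
      obtain ⟨hpP, hp1, hp2⟩ := hQmem p hp
      have h5 := honly p hpP hp1 hp2
      have h6 := hw p hpP
      have h7 : (0:ℝ) < r - dist p c / w p := by linarith
      exact div_pos (mul_pos h7 h6) hD
  have ht₀le : t₀ ≤ 1 := Finset.inf'_le _ (Finset.mem_insert_self _ _)
  set t : ℝ := t₀ / 2 with ht
  have htpos : 0 < t := by positivity
  have htlt1 : t < 1 := by rw [ht]; linarith
  have htltt₀ : t < t₀ := by rw [ht]; linarith
  set x : Pt := (1 - t) • c + t • c' with hx
  have hdcx : dist c x = t * D := by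
    have hxc : x - c = t • (c' - c) := by rw [hx]; module
    rw [dist_comm, dist_eq_norm, hxc, norm_smul, Real.norm_eq_abs, abs_of_pos htpos,
      hDdef, dist_eq_norm]
  have hconv : ∀ p : Pt, dist p x ≤ (1 - t) * dist p c + t * dist p c' := by
    intro p
    have hid : p - x = (1 - t) • (p - c) + t • (p - c') := by rw [hx]; module
    rw [dist_eq_norm, dist_eq_norm, dist_eq_norm, hid]
    calc ‖(1 - t) • (p - c) + t • (p - c')‖ ≤ ‖(1 - t) • (p - c)‖ + ‖t • (p - c')‖ :=
          norm_add_le _ _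
      _ = (1 - t) * ‖p - c‖ + t * ‖p - c'‖ := by
          rw [norm_smul, norm_smul, Real.norm_eq_abs, Real.norm_eq_abs,
            abs_of_pos (by linarith : (0:ℝ) < 1 - t), abs_of_pos htpos]
  have hall : ∀ p ∈ P, dist p x / w p < r := by
    intro p hp
    have hwp := hw p hp
    by_cases e1 : p = p₁
    · subst e1
      have hcv := hconv p
      have hlt : dist p x < dist p c := by nlinarith [mul_pos htpos (sub_pos.2 hk1)]
      rw [← hd₁]
      exact (div_lt_div_iff_of_pos_right hwp).2 hlt
    · by_cases e2 : p = p₂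
      · subst e2
        have hcv := hconv p
        have hlt : dist p x < dist p c := by nlinarith [mul_pos htpos (sub_pos.2 hk2)]
        rw [← hd₂]
        exact (div_lt_div_iff_of_pos_right hwp).2 hlt
      · have hpQ : p ∈ Q := by
          rw [hQ]
          exact Finset.mem_erase.2 ⟨e2, Finset.mem_erase.2 ⟨e1, hp⟩⟩
        have hbound : t₀ ≤ (r - dist p c / w p) * w p / D :=
          Finset.inf'_le _ (Finset.mem_insert_of_mem (Finset.mem_image_of_mem _ hpQ))
        have h5 : dist p x ≤ dist p c + t * D :=
          (dist_triangle p c x).trans (by rw [hdcx])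
        have h6 : t * D < (r - dist p c / w p) * w p := by
          have h6' : t < (r - dist p c / w p) * w p / D := lt_of_lt_of_le htltt₀ hbound
          calc t * D < ((r - dist p c / w p) * w p / D) * D :=
                mul_lt_mul_of_pos_right h6' hD
            _ = (r - dist p c / w p) * w p := by field_simp
        rw [sub_mul, div_mul_cancel₀ _ (ne_of_gt hwp)] at h6
        rw [div_lt_iff₀ hwp]
        linarith
  have hsup : P.sup' hP (fun p => dist p x / w p) < r :=
    (Finset.sup'_lt_iff hP).2 hall
  have hfin := hmin x
  rw [hmax] at hfin
  linarith
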